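/- Let P = (r, z, Δ_0, m) ∈ ℂ^{q+2n+1} be a point such that z_1 = ⋯ = z_t = 0 for some 1 ≤ t ≤ n, z_{t+1}, …, z_n are all nonzero, and the Cayley–Menger matrix A(r²) of the numbers r_{ij}² has rank n. Then the rank ρ of the (n+1) × (n+1) Jacobian matrix of Γ_0, Γ_1, …, Γ_n with respect to the variables Δ, M_1, …, M_n evaluated at P satisfies n − t ≤ ρ ≤ n − t + 1; in particular this matrix has a nonsingular square submatrix of order n − t or n − t + 1. -/

import Mathlib

/-- Index type for the mutual-distance coordinates `r_{ij}`, `1 ≤ i < j ≤ n`. -/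
abbrev PairIdx (n : ℕ) := {p : Fin n × Fin n // p.1 < p.2}

/-- `r_{ij}` as a symmetric function of the coordinates indexed by ordered pairs
(`r_{ll} = 0`). -/
noncomputable def rC {n : ℕ} (r : PairIdx n → ℂ) (i j : Fin n) : ℂ :=
  if h : i < j then r ⟨(i, j), h⟩ else if h' : j < i then r ⟨(j, i), h'⟩ else 0

/-- The Cayley–Menger matrix `A(r²)` of the numbers `r_{ij}`. -/
noncomputable def cmOf {n : ℕ} (r : PairIdx n → ℂ) :
    Matrix (Fin (n + 1)) (Fin (n + 1)) ℂ :=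
  Matrix.of fun i j =>
    Fin.cases (Fin.cases 0 (fun _ => 1) j)
      (fun i' => Fin.cases 1 (fun j' => rC r i' j' ^ 2) j) i

/-- The Jacobian matrix of `Γ_0, Γ_1, …, Γ_n` with respect to `Δ, M_1, …, M_n`:
the row for `Γ_0` is `(0, z_1, …, z_n)` and the row for `Γ_l` is
`(1, z_1 r_{1l}², …, z_n r_{nl}²)`. -/
noncomputable def gammaJac {n : ℕ} (r : PairIdx n → ℂ) (z : Fin n → ℂ) :
    Matrix (Fin (n + 1)) (Fin (n + 1)) ℂ :=
  Matrix.of fun l j =>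
    Fin.cases (Fin.cases 0 (fun j' => z j') j)
      (fun l' => Fin.cases 1 (fun j' => z j' * rC r j' l' ^ 2) j) l



open Matrix Module Submodule

/-- Sylvester rank inequality. -/
lemma sylvester_aux {N : ℕ} (A B : Matrix (Fin N) (Fin N) ℂ) :
    A.rank + B.rank ≤ (A * B).rank + N := by
  classical
  set f := A.mulVecLin with hf
  set p := LinearMap.range B.mulVecLin with hp
  have hAB : (A * B).rank = finrank ℂ (p.map f) := by
    rw [Matrix.rank, Matrix.mulVecLin_mul, LinearMap.range_comp]
  have h1 := LinearMap.finrank_range_add_finrank_ker (f.domRestrict p)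
  rw [LinearMap.range_domRestrict] at h1
  have h2 : finrank ℂ (LinearMap.ker (f.domRestrict p)) ≤ finrank ℂ (LinearMap.ker f) := by
    have hle : (LinearMap.ker (f.domRestrict p)).map p.subtype ≤ LinearMap.ker f := by
      rintro x ⟨y, hy, rfl⟩
      simpa [LinearMap.mem_ker] using hy
    calc finrank ℂ (LinearMap.ker (f.domRestrict p))
        = finrank ℂ ((LinearMap.ker (f.domRestrict p)).map p.subtype) :=
          (Submodule.finrank_map_subtype_eq _ _).symm
      _ ≤ finrank ℂ (LinearMap.ker f) := Submodule.finrank_mono hle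
  have h3 : A.rank + finrank ℂ (LinearMap.ker f) = N := by
    have h := LinearMap.finrank_range_add_finrank_ker f
    rwa [Module.finrank_fin_fun] at h
  have hB : B.rank = finrank ℂ p := rfl
  omega

lemma exists_inj_linearIndependent {ι : Type*} [Fintype ι] {V : Type*} [AddCommGroup V]
    [Module ℂ V] (v : ι → V) (u : ℕ)
    (hu : finrank ℂ (Submodule.span ℂ (Set.range v)) = u) :
    ∃ g : Fin u → ι, Function.Injective g ∧ LinearIndependent ℂ (v ∘ g) := by
  classical
  obtain ⟨s, hsub, hspan, hli⟩ := exists_linearIndependent ℂ (Set.range v)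
  have hsfin : s.Finite := (Set.finite_range v).subset hsub
  haveI := hsfin.fintype
  have hcard : Fintype.card s = u := by
    rw [← Set.toFinset_card, ← finrank_span_set_eq_card hli, hspan, hu]
  let e : Fin u ≃ s := (Fintype.equivFinOfCardEq hcard).symm
  have hsel : ∀ j : Fin u, ∃ i : ι, v i = (e j : V) := fun j => hsub (e j).2
  choose g hg using hsel
  refine ⟨g, ?_, ?_⟩
  · intro j₁ j₂ h
    have : (e j₁ : V) = (e j₂ : V) := by rw [← hg j₁, ← hg j₂, h]
    exact e.injective (Subtype.ext this)
  · have : v ∘ g = (fun x : s => (x : V)) ∘ e := funext fun j => hg j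
    rw [this]
    exact hli.comp e e.injective

lemma exists_nonsingular_minor {N : ℕ} (M : Matrix (Fin N) (Fin N) ℂ) :
    ∃ e f : Fin M.rank → Fin N, Function.Injective e ∧ Function.Injective f ∧
      (M.submatrix e f).det ≠ 0 := by
  classical
  have hc : finrank ℂ (Submodule.span ℂ (Set.range Mᵀ)) = M.rank :=
    (Matrix.rank_eq_finrank_span_cols M).symm
  obtain ⟨f, hf, hli⟩ := exists_inj_linearIndependent Mᵀ _ hc
  set B : Matrix (Fin N) (Fin M.rank) ℂ := M.submatrix id f with hBdef
  have hBT : Bᵀ = Mᵀ ∘ f := by ext j i; rfl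
  have hBrank : B.rank = M.rank := by
    rw [Matrix.rank_eq_finrank_span_cols]
    change finrank ℂ (Submodule.span ℂ (Set.range Bᵀ)) = M.rank
    rw [hBT, finrank_span_eq_card hli, Fintype.card_fin]
  have hrow : finrank ℂ (Submodule.span ℂ (Set.range (fun i : Fin N => B i))) = M.rank := by
    have h2 := Matrix.rank_eq_finrank_span_cols Bᵀ
    rw [Matrix.rank_transpose, hBrank] at h2
    exact h2.symm
  obtain ⟨e, he, hlir⟩ := exists_inj_linearIndependent (fun i : Fin N => B i) _ hrow
  refine ⟨e, f, he, hf, ?_⟩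
  have hli2 : LinearIndependent ℂ (fun j => (M.submatrix e f) j) := hlir
  have hunit : IsUnit (M.submatrix e f) := Matrix.linearIndependent_rows_iff_isUnit.mp hli2
  have := (Matrix.isUnit_iff_isUnit_det _).mp hunit
  exact this.ne_zero


lemma rC_symm {n : ℕ} (r : PairIdx n → ℂ) (i j : Fin n) : rC r i j = rC r j i := by
  unfold rC
  rcases lt_trichotomy i j with h | h | h
  · rw [dif_pos h, dif_neg (asymm h), dif_pos h]
  · subst h; simp
  · rw [dif_neg (asymm h), dif_pos h, dif_pos h]

lemma gammaJac_eq {n : ℕ} (r : PairIdx n → ℂ) (z : Fin n → ℂ) :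
    gammaJac r z = cmOf r * Matrix.diagonal (Fin.cons 1 z) := by
  classical
  ext l j
  rw [Matrix.mul_diagonal]
  induction l using Fin.cases with
  | zero =>
    induction j using Fin.cases with
    | zero => simp [gammaJac, cmOf]
    | succ j' => simp [gammaJac, cmOf]
  | succ l' =>
    induction j using Fin.cases with
    | zero => simp [gammaJac, cmOf]
    | succ j' =>
      simp only [gammaJac, cmOf, Matrix.of_apply, Fin.cases_succ, Fin.cons_succ]
      rw [rC_symm r j' l']; ring

lemma sumRangeIte (t N : ℕ) :
    (∑ j ∈ Finset.range N, if t ≤ j then (1:ℕ) else 0) = N - t := by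
  induction N with
  | zero => simp
  | succ N ih =>
    rw [Finset.sum_range_succ, ih]
    split_ifs with h <;> omega

lemma rankD {n t : ℕ} (ht2 : t ≤ n) (z : Fin n → ℂ)
    (hz0 : ∀ i : Fin n, (i : ℕ) < t → z i = 0)
    (hz1 : ∀ i : Fin n, t ≤ (i : ℕ) → z i ≠ 0) :
    (Matrix.diagonal (Fin.cons 1 z) : Matrix (Fin (n+1)) (Fin (n+1)) ℂ).rank = n - t + 1 := by
  classical
  rw [Matrix.rank_diagonal, Fintype.card_subtype, Finset.card_filter, Fin.sum_univ_succ]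
  simp only [Fin.cons_zero, Fin.cons_succ]
  rw [if_pos one_ne_zero]
  have hsucc : ∀ j : Fin n, ((if z j ≠ 0 then 1 else 0) : ℕ) = if t ≤ (j : ℕ) then 1 else 0 := by
    intro j
    by_cases h : t ≤ (j : ℕ)
    · rw [if_pos (hz1 j h), if_pos h]
    · rw [if_neg (by simpa using hz0 j (by omega)), if_neg h]
  rw [Finset.sum_congr rfl (fun j _ => hsucc j),
    Fin.sum_univ_eq_sum_range (fun j => if t ≤ j then (1:ℕ) else 0)]
  rw [sumRangeIte]
  omega

/-- Let `P = (r, z, Δ_0, m)` be a point with `z_1 = ⋯ = z_t = 0`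
(`1 ≤ t ≤ n`), `z_{t+1}, …, z_n` all nonzero, and such that the Cayley–Menger matrix
`A(r²)` has rank `n`. Then the rank `ρ` of the Jacobian matrix of `Γ_0, …, Γ_n` with
respect to `Δ, M_1, …, M_n` at `P` satisfies `n − t ≤ ρ ≤ n − t + 1`; in particular this
matrix has a nonsingular square submatrix of order `n − t` or `n − t + 1`. -/
theorem statement14 {n t : ℕ} (hn : 3 ≤ n) (ht1 : 1 ≤ t) (ht2 : t ≤ n)
    (r : PairIdx n → ℂ) (z : Fin n → ℂ) (Δ0 : ℂ) (m : Fin n → ℂ)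
    (hz0 : ∀ i : Fin n, (i : ℕ) < t → z i = 0)
    (hz1 : ∀ i : Fin n, t ≤ (i : ℕ) → z i ≠ 0)
    (hrank : (cmOf r).rank = n) :
    (n - t ≤ (gammaJac r z).rank ∧ (gammaJac r z).rank ≤ n - t + 1) ∧
    ∃ u : ℕ, (u = n - t ∨ u = n - t + 1) ∧
      ∃ (e f : Fin u → Fin (n + 1)),
        Function.Injective e ∧ Function.Injective f ∧
        ((gammaJac r z).submatrix e f).det ≠ 0 := by
  classical
  have hJ : gammaJac r z = cmOf r * Matrix.diagonal (Fin.cons 1 z) := gammaJac_eq r z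
  have hD : (Matrix.diagonal (Fin.cons 1 z) : Matrix (Fin (n+1)) (Fin (n+1)) ℂ).rank
      = n - t + 1 := rankD ht2 z hz0 hz1
  have hupper : (gammaJac r z).rank ≤ n - t + 1 := by
    rw [hJ, ← hD]
    exact Matrix.rank_mul_le_right _ _
  have hlower : n - t ≤ (gammaJac r z).rank := by
    have hs := sylvester_aux (cmOf r) (Matrix.diagonal (Fin.cons 1 z))
    rw [← hJ, hrank, hD] at hs
    omega
  refine ⟨⟨hlower, hupper⟩, (gammaJac r z).rank, by omega, ?_⟩
  exact exists_nonsingular_minor (gammaJac r z)
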